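/- arXiv:2411.02895 — 8 statements merged into one kernel-verified Lean document; each statement's English description precedes it below -/
import Mathlib

section
/- Let A, B ∈ ℂ^{n×n} be a singular pencil (det(A - λ·B) = 0 for all λ ∈ ℂ) of normal rank k := nrank(A,B). Then there exist matrices U, V ∈ ℂ^{n×(n-k)} such that for every λ0 ∈ ℂ the following equivalence holds: rank(A - λ0·B) < k if and only if there exist nonzero vectors x, y ∈ ℂⁿ with (A - λ0·B)x = 0, Uᴴx = 0, yᴴ(A - λ0·B) = 0, and Vᴴy = 0. -/
open Matrix Module Submodule

open scoped ComplexOrder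

section AuxBorder

-- avoidance: a point outside finitely many proper subspaces
lemma aux_avoid {K V : Type*} [Field K] [Infinite K] [AddCommGroup V] [Module K V]
    {ι : Type*} [Finite ι] (p : ι → Submodule K V) (h : ∀ i, p i ≠ ⊤) :
    ∃ v : V, ∀ i, v ∉ p i := by
  by_contra hc
  push_neg at hc
  have hcov : ⋃ i, ((p i : Set V)) = Set.univ := by
    ext v; simp only [Set.mem_iUnion, Set.mem_univ, iff_true]
    obtain ⟨i, hi⟩ := hc v; exact ⟨i, hi⟩
  obtain ⟨i, hi⟩ := Subspace.exists_eq_top_of_iUnion_eq_univ hcov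
  exact h i hi

-- a subspace of prescribed dimension avoiding finitely many subspaces
lemma aux_subspace {K V : Type*} [Field K] [Infinite K] [AddCommGroup V] [Module K V]
    [FiniteDimensional K V] {ι : Type*} [Finite ι] (W : ι → Submodule K V) (d : ℕ)
    (hdV : d ≤ finrank K V) (hd : ∀ i, finrank K (W i) + d ≤ finrank K V) :
    ∃ S : Submodule K V, finrank K S = d ∧ ∀ i, S ⊓ W i = ⊥ := by
  haveI := Fintype.ofFinite ι
  induction d with
  | zero => exact ⟨⊥, finrank_bot K V, fun i => bot_inf_eq _⟩
  | succ d ih =>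
    obtain ⟨S, hS, hSW⟩ := ih (le_trans (Nat.le_succ d) hdV)
      (fun i => le_trans (by omega) (hd i))
    -- family: S itself and all S ⊔ W i, all proper
    have hproper : ∀ o : Option ι, (Option.elim o S (fun i => S ⊔ W i)) ≠ ⊤ := by
      rintro (_ | i) htop <;>
        simp only [Option.elim_none, Option.elim_some] at htop
      · have := htop ▸ finrank_top K V
        rw [hS] at this; omega
      · have h1 : finrank K ↥(S ⊔ W i) + finrank K ↥(S ⊓ W i)
            = finrank K ↥S + finrank K ↥(W i) := finrank_sup_add_finrank_inf_eq S (W i)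
        rw [hSW i, finrank_bot, hS] at h1
        have h2 : finrank K ↥(S ⊔ W i) < finrank K V := by have := hd i; omega
        rw [htop, finrank_top] at h2; omega
    obtain ⟨v, hv⟩ := aux_avoid _ hproper
    have hvS : v ∉ S := hv none
    have hv0 : v ≠ 0 := fun h => hvS (h ▸ S.zero_mem)
    refine ⟨S ⊔ K ∙ v, ?_, ?_⟩
    · have hdisj : S ⊓ (K ∙ v) = ⊥ := by
        rw [← disjoint_iff]
        exact (Submodule.disjoint_span_singleton' hv0).mpr hvS
      have h1 := finrank_sup_add_finrank_inf_eq S (K ∙ v)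
      rw [hdisj, finrank_bot, hS, finrank_span_singleton hv0] at h1
      omega
    · intro i
      rw [eq_bot_iff]
      intro w hw
      rw [Submodule.mem_inf] at hw
      obtain ⟨hw1, hw2⟩ := hw
      rw [Submodule.mem_sup] at hw1
      obtain ⟨s, hs, z, hz, rfl⟩ := hw1
      rw [Submodule.mem_span_singleton] at hz
      obtain ⟨c, rfl⟩ := hz
      rcases eq_or_ne c 0 with rfl | hc
      · rw [zero_smul, add_zero] at hw2 ⊢
        have : s ∈ S ⊓ W i := ⟨hs, hw2⟩
        rw [hSW i] at this; exact this
      · exfalso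
        apply hv (some i)
        have : v = c⁻¹ • ((s + c • v) - s) := by
          rw [add_sub_cancel_left, smul_smul, inv_mul_cancel₀ hc, one_smul]
        rw [this]
        exact Submodule.smul_mem _ _ (Submodule.sub_mem _
          (Submodule.mem_sup_right hw2) (Submodule.mem_sup_left hs))

-- a linear map to ℂ^d injective on each of finitely many subspaces of dim ≤ d
lemma aux_map {n d : ℕ} (hd : d ≤ n) {ι : Type*} [Finite ι]
    (W : ι → Submodule ℂ (Fin n → ℂ)) (hW : ∀ i, finrank ℂ (W i) ≤ d) :
    ∃ f : (Fin n → ℂ) →ₗ[ℂ] (Fin d → ℂ), ∀ i, ∀ y ∈ W i, f y = 0 → y = 0 := by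
  have hfr : finrank ℂ (Fin n → ℂ) = n := Module.finrank_fin_fun ℂ
  obtain ⟨S, hS, hSW⟩ := aux_subspace W (n - d) (by omega)
    (fun i => by have := hW i; omega)
  have hq : finrank ℂ ((Fin n → ℂ) ⧸ S) = d := by
    have := S.finrank_quotient_add_finrank
    rw [hS, hfr] at this; omega
  obtain ⟨e⟩ := FiniteDimensional.nonempty_linearEquiv_of_finrank_eq
    (hq.trans (Module.finrank_fin_fun ℂ).symm)
  refine ⟨e.toLinearMap ∘ₗ S.mkQ, fun i y hy hfy => ?_⟩
  have h0 : S.mkQ y = 0 := e.map_eq_zero_iff.mp hfy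
  have hyS : y ∈ S := by rwa [← Submodule.ker_mkQ S, LinearMap.mem_ker]
  have : y ∈ S ⊓ W i := ⟨hyS, hy⟩
  rw [hSW i] at this
  exact this

lemma aux_sum_dot {ι κ : Type*} [Fintype ι] [Fintype κ] (f : ι → κ → ℂ) (w : κ → ℂ) :
    (∑ j, f j) ⬝ᵥ w = ∑ j, f j ⬝ᵥ w := by
  simp only [dotProduct, Finset.sum_apply, Finset.sum_mul]
  exact Finset.sum_comm

lemma aux_dots {ι κ : Type*} [Fintype ι] [Fintype κ] (w1 : ι → ℂ) (w2 : κ → ℂ)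
    (h : star w1 ⬝ᵥ w1 + star w2 ⬝ᵥ w2 = 0) : w1 = 0 ∧ w2 = 0 := by
  have h1 := dotProduct_star_self_nonneg w1
  have h2 := dotProduct_star_self_nonneg w2
  obtain ⟨e1, e2⟩ := (add_eq_zero_iff_of_nonneg h1 h2).mp h
  exact ⟨dotProduct_star_self_eq_zero.mp e1, dotProduct_star_self_eq_zero.mp e2⟩

lemma aux_selfdot {m p : Type*} [Fintype m] [Fintype p] (C : Matrix m p ℂ) (x : p → ℂ) :
    star x ⬝ᵥ (Cᴴ *ᵥ (C *ᵥ x)) = star (C *ᵥ x) ⬝ᵥ (C *ᵥ x) := by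
  rw [Matrix.dotProduct_mulVec, ← Matrix.star_mulVec]

end AuxBorder

theorem exists_border_detecting_eigenvalues {n : ℕ}
    (A B : Matrix (Fin n) (Fin n) ℂ)
    (hsing : ∀ l : ℂ, (A - l • B).det = 0)
    (k : ℕ)
    (hk_le : ∀ μ : ℂ, (A - μ • B).rank ≤ k)
    (hk_attained : ∃ μ : ℂ, (A - μ • B).rank = k) :
    ∃ U V : Matrix (Fin n) (Fin (n - k)) ℂ,
      ∀ l0 : ℂ,
        (A - l0 • B).rank < k ↔
          ∃ x y : Fin n → ℂ, x ≠ 0 ∧ y ≠ 0 ∧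
            (A - l0 • B) *ᵥ x = 0 ∧ Uᴴ *ᵥ x = 0 ∧
            (star y) ᵥ* (A - l0 • B) = 0 ∧ Vᴴ *ᵥ y = 0 := by
  classical
  obtain ⟨μ, hμ⟩ := hk_attained
  set M0 : Matrix (Fin n) (Fin n) ℂ := A - μ • B with hM0
  -- rank-nullity for square matrices
  have hrnM : ∀ C : Matrix (Fin n) (Fin n) ℂ,
      C.rank + finrank ℂ (LinearMap.ker C.mulVecLin) = n := by
    intro C
    have h1 : C.rank = finrank ℂ (LinearMap.range C.mulVecLin) := rfl
    have := LinearMap.finrank_range_add_finrank_ker C.mulVecLin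
    rw [Module.finrank_fin_fun ℂ] at this
    omega
  have hkn : k ≤ n := by
    have h1 := M0.rank_le_card_width
    rw [Fintype.card_fin] at h1
    omega
  -- kernel of M0 and its basis
  set K0 : Submodule ℂ (Fin n → ℂ) := LinearMap.ker M0.mulVecLin with hK0
  have hfK0 : finrank ℂ K0 = n - k := by
    have := hrnM M0
    rw [hμ, ← hK0] at this
    omega
  obtain ⟨b⟩ : Nonempty (Basis (Fin (n - k)) ℂ K0) := ⟨finBasisOfFinrankEq ℂ K0 hfK0⟩
  set U : Matrix (Fin n) (Fin (n - k)) ℂ := Matrix.of (fun i j => (b j : Fin n → ℂ) i) with hU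
  have hUapp : ∀ (x : Fin n → ℂ) (j : Fin (n - k)),
      (Uᴴ *ᵥ x) j = star ((b j : Fin n → ℂ)) ⬝ᵥ x := by
    intro x j
    simp [Matrix.mulVec, Matrix.conjTranspose_apply, dotProduct, hU]
  -- injectivity of Uᴴ on K0
  have hUinj : ∀ x : Fin n → ℂ, M0 *ᵥ x = 0 → Uᴴ *ᵥ x = 0 → x = 0 := by
    intro x hx hUx
    have hxK : x ∈ K0 := by rwa [hK0, LinearMap.mem_ker, Matrix.mulVecLin_apply]
    set z : K0 := ⟨x, hxK⟩ with hz
    have hxe : x = ∑ j, b.repr z j • ((b j : Fin n → ℂ)) := by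
      have h1 : ((∑ j, b.repr z j • b j : K0) : Fin n → ℂ)
          = ∑ j, b.repr z j • ((b j : Fin n → ℂ)) := by
        rw [Submodule.coe_sum]
        simp only [SetLike.val_smul]
      rw [← h1, b.sum_repr z]
    have hdot : ∀ w : Fin n → ℂ, (∀ j, star ((b j : Fin n → ℂ)) ⬝ᵥ w = 0) →
        star x ⬝ᵥ w = 0 := by
      intro w hw
      conv_lhs => rw [hxe]
      rw [star_sum]
      simp only [star_smul]
      rw [aux_sum_dot]
      apply Finset.sum_eq_zero
      intro j _
      rw [smul_dotProduct, hw j, smul_zero]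
    have hdot2 : star x ⬝ᵥ x = 0 :=
      hdot x (fun j => by rw [← hUapp x j, hUx]; rfl)
    exact dotProduct_star_self_eq_zero.mp hdot2
  -- the polynomial q
  set X : Matrix (Fin n) (Fin n) ℂ := M0ᴴ * A + U * Uᴴ with hX
  set Y : Matrix (Fin n) (Fin n) ℂ := M0ᴴ * B with hY
  have hPl : ∀ l : ℂ, M0ᴴ * (A - l • B) + U * Uᴴ = X - l • Y := by
    intro l
    rw [hX, hY, Matrix.mul_sub, Matrix.mul_smul]
    abel
  set q : Polynomial ℂ :=
    (Matrix.of (fun i j => Polynomial.C (X i j) - Polynomial.X * Polynomial.C (Y i j))).det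
    with hq
  have hqeval : ∀ l : ℂ, q.eval l = (M0ᴴ * (A - l • B) + U * Uᴴ).det := by
    intro l
    rw [hPl l, hq]
    rw [show Polynomial.eval l = (Polynomial.evalRingHom l : Polynomial ℂ → ℂ) from rfl]
    rw [RingHom.map_det]
    congr 1
    ext i j
    simp only [RingHom.mapMatrix_apply, Matrix.map_apply, Matrix.of_apply, Matrix.sub_apply, Matrix.smul_apply,
      Polynomial.coe_evalRingHom, Polynomial.eval_sub, Polynomial.eval_mul,
      Polynomial.eval_C, Polynomial.eval_X, smul_eq_mul]
  have hqμ : q.eval μ ≠ 0 := by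
    rw [hqeval μ, ← hM0]
    intro hdet
    obtain ⟨x, hx0, hxe⟩ := (Matrix.exists_mulVec_eq_zero_iff).mpr hdet
    have hdots : star (M0 *ᵥ x) ⬝ᵥ (M0 *ᵥ x) + star (Uᴴ *ᵥ x) ⬝ᵥ (Uᴴ *ᵥ x) = 0 := by
      have e1 := aux_selfdot M0 x
      have e2 := aux_selfdot Uᴴ x
      rw [Matrix.conjTranspose_conjTranspose] at e2
      rw [← e1, ← e2, Matrix.mulVec_mulVec, Matrix.mulVec_mulVec,
        ← dotProduct_add, ← Matrix.add_mulVec, hxe, dotProduct_zero]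
    obtain ⟨hw1, hw2⟩ := aux_dots _ _ hdots
    exact hx0 (hUinj x hw1 hw2)
  have hqne : q ≠ 0 := fun h => hqμ (by rw [h, Polynomial.eval_zero])
  -- the finite bad set
  set T : Set ℂ := {l | q.eval l = 0 ∧ (A - l • B).rank = k} with hT
  have hTfin : T.Finite :=
    (Polynomial.finite_setOf_isRoot hqne).subset (fun l hl => hl.1)
  haveI : Finite ↥T := hTfin.to_subtype
  set W : ↥T → Submodule ℂ (Fin n → ℂ) :=
    fun l => LinearMap.ker (A - (l : ℂ) • B)ᴴ.mulVecLin with hW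
  have hWd : ∀ i : ↥T, finrank ℂ (W i) ≤ n - k := by
    intro i
    have h1 := hrnM (A - (i : ℂ) • B)ᴴ
    rw [Matrix.rank_conjTranspose, i.2.2] at h1
    show finrank ℂ ↥(LinearMap.ker (A - (i : ℂ) • B)ᴴ.mulVecLin) ≤ n - k
    omega
  obtain ⟨f, hf⟩ := aux_map (Nat.sub_le n k) W hWd
  set V : Matrix (Fin n) (Fin (n - k)) ℂ := (LinearMap.toMatrix' f)ᴴ with hV
  have hVapp : ∀ y : Fin n → ℂ, Vᴴ *ᵥ y = f y := by
    intro y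
    rw [hV, Matrix.conjTranspose_conjTranspose, ← Matrix.toLin'_apply,
      Matrix.toLin'_toMatrix']
  refine ⟨U, V, fun l0 => ⟨fun hlt => ?_, ?_⟩⟩
  · -- forward direction
    obtain ⟨x, hx0, hx1, hx2⟩ : ∃ x : Fin n → ℂ, x ≠ 0 ∧ (A - l0 • B) *ᵥ x = 0 ∧
        Uᴴ *ᵥ x = 0 := by
      set Kl := LinearMap.ker (A - l0 • B).mulVecLin with hKl
      set g : Kl →ₗ[ℂ] (Fin (n - k) → ℂ) := (Uᴴ.mulVecLin).domRestrict Kl with hg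
      have hker : LinearMap.ker g ≠ ⊥ := by
        intro hbot
        have hinj : Function.Injective g := LinearMap.ker_eq_bot.mp hbot
        have hle := LinearMap.finrank_le_finrank_of_injective hinj
        rw [Module.finrank_fin_fun ℂ] at hle
        have h2 := hrnM (A - l0 • B)
        rw [← hKl] at h2
        omega
      obtain ⟨z, hzk, hz0⟩ := Submodule.exists_mem_ne_zero_of_ne_bot hker
      refine ⟨(z : Fin n → ℂ), fun h => hz0 (Subtype.ext h), ?_, ?_⟩
      · have h3 : (A - l0 • B).mulVecLin (z : Fin n → ℂ) = 0 := LinearMap.mem_ker.mp z.2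
        rwa [Matrix.mulVecLin_apply] at h3
      · have h3 : g z = 0 := hzk
        rw [hg, LinearMap.domRestrict_apply, Matrix.mulVecLin_apply] at h3
        exact h3
    obtain ⟨y, hy0, hy1, hy2⟩ : ∃ y : Fin n → ℂ, y ≠ 0 ∧ (A - l0 • B)ᴴ *ᵥ y = 0 ∧
        f y = 0 := by
      set Ll := LinearMap.ker (A - l0 • B)ᴴ.mulVecLin with hLl
      set g : Ll →ₗ[ℂ] (Fin (n - k) → ℂ) := f.domRestrict Ll with hg
      have hker : LinearMap.ker g ≠ ⊥ := by
        intro hbot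
        have hinj : Function.Injective g := LinearMap.ker_eq_bot.mp hbot
        have hle := LinearMap.finrank_le_finrank_of_injective hinj
        rw [Module.finrank_fin_fun ℂ] at hle
        have h2 := hrnM (A - l0 • B)ᴴ
        rw [Matrix.rank_conjTranspose, ← hLl] at h2
        omega
      obtain ⟨z, hzk, hz0⟩ := Submodule.exists_mem_ne_zero_of_ne_bot hker
      refine ⟨(z : Fin n → ℂ), fun h => hz0 (Subtype.ext h), ?_, ?_⟩
      · have h3 : (A - l0 • B)ᴴ.mulVecLin (z : Fin n → ℂ) = 0 := LinearMap.mem_ker.mp z.2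
        rwa [Matrix.mulVecLin_apply] at h3
      · exact hzk
    refine ⟨x, y, hx0, hy0, hx1, hx2, ?_, ?_⟩
    · have h1 : star ((A - l0 • B)ᴴ *ᵥ y) = star y ᵥ* (A - l0 • B) := by
        rw [Matrix.star_mulVec, Matrix.conjTranspose_conjTranspose]
      rw [← h1, hy1, star_zero]
    · rw [hVapp, hy2]
  · -- backward direction
    rintro ⟨x, y, hx0, hy0, hx1, hx2, hy1, hy2⟩
    by_contra hge
    have hrank : (A - l0 • B).rank = k := le_antisymm (hk_le l0) (Nat.le_of_not_lt hge)
    have hq0 : q.eval l0 = 0 := by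
      rw [hqeval l0]
      apply Matrix.exists_mulVec_eq_zero_iff.mp
      refine ⟨x, hx0, ?_⟩
      rw [Matrix.add_mulVec, ← Matrix.mulVec_mulVec, ← Matrix.mulVec_mulVec, hx1, hx2,
        Matrix.mulVec_zero, Matrix.mulVec_zero, add_zero]
    have hl0T : l0 ∈ T := ⟨hq0, hrank⟩
    have hyW : y ∈ W ⟨l0, hl0T⟩ := by
      show y ∈ LinearMap.ker (A - l0 • B)ᴴ.mulVecLin
      rw [LinearMap.mem_ker, Matrix.mulVecLin_apply]
      have h1 : star (star y ᵥ* (A - l0 • B)) = (A - l0 • B)ᴴ *ᵥ y := by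
        rw [Matrix.star_vecMul, star_star]
      rw [← h1, hy1, star_zero]
    have : y = 0 := hf ⟨l0, hl0T⟩ y hyW (by rw [← hVapp, hy2])
    exact hy0 this
end

section
/- Let A ∈ ℂ^{n×n} with rank(A) = n - m for some 0 ≤ m ≤ n. Then there exist matrices V, W ∈ ℂ^{n×m} such that the bordered matrix Â = [[A, W],[Vᴴ, 0]] ∈ ℂ^{(n+m)×(n+m)} is invertible. -/
open Matrix

/-- Let `A ∈ ℂ^{n×n}` with `rank A = n - m` for some `0 ≤ m ≤ n`. Then there
exist `V, W ∈ ℂ^{n×m}` such that the bordered matrix `Â = [[A, W],[Vᴴ, 0]]` is invertible. -/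
theorem exists_invertible_bordering {n m : ℕ} (hm : m ≤ n)
    (A : Matrix (Fin n) (Fin n) ℂ) (hrank : A.rank = n - m) :
    ∃ V W : Matrix (Fin n) (Fin m) ℂ,
      IsUnit (Matrix.fromBlocks A W Vᴴ (0 : Matrix (Fin m) (Fin m) ℂ)) := by
  classical
  set f := A.mulVecLin with hf
  have hpin : Module.finrank ℂ (Fin n → ℂ) = n := by simp
  have hpim : Module.finrank ℂ (Fin m → ℂ) = m := by simp
  have hrk : Module.finrank ℂ (LinearMap.range f) = n - m := hrank
  have hsum := LinearMap.finrank_range_add_finrank_ker f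
  rw [hpin, hrk] at hsum
  have hker : Module.finrank ℂ (LinearMap.ker f) = m := by omega
  obtain ⟨C, hC⟩ := Submodule.exists_isCompl (LinearMap.range f)
  have hCdim : Module.finrank ℂ C = m := by
    have := Submodule.finrank_add_eq_of_isCompl hC
    rw [hrk, hpin] at this
    omega
  obtain ⟨K', hK'⟩ := Submodule.exists_isCompl (LinearMap.ker f)
  have e1 : (Fin m → ℂ) ≃ₗ[ℂ] C :=
    LinearEquiv.ofFinrankEq _ _ (by rw [hpim, hCdim])
  have e2 : (LinearMap.ker f) ≃ₗ[ℂ] (Fin m → ℂ) :=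
    LinearEquiv.ofFinrankEq _ _ (by rw [hker, hpim])
  let w : (Fin m → ℂ) →ₗ[ℂ] (Fin n → ℂ) := C.subtype ∘ₗ (e1 : (Fin m → ℂ) →ₗ[ℂ] C)
  let v : (Fin n → ℂ) →ₗ[ℂ] (Fin m → ℂ) :=
    (e2 : (LinearMap.ker f) →ₗ[ℂ] (Fin m → ℂ)) ∘ₗ
      Submodule.linearProjOfIsCompl _ _ hK'
  refine ⟨(LinearMap.toMatrix' v)ᴴ, LinearMap.toMatrix' w, ?_⟩
  rw [conjTranspose_conjTranspose]
  rw [← Matrix.mulVec_injective_iff_isUnit]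
  have hWy : ∀ y, (LinearMap.toMatrix' w) *ᵥ y = w y := fun y => by
    rw [← Matrix.toLin'_apply, Matrix.toLin'_toMatrix']
  have hVx : ∀ x, (LinearMap.toMatrix' v) *ᵥ x = v x := fun x => by
    rw [← Matrix.toLin'_apply, Matrix.toLin'_toMatrix']
  set M := Matrix.fromBlocks A (LinearMap.toMatrix' w)
      (LinearMap.toMatrix' v) (0 : Matrix (Fin m) (Fin m) ℂ) with hM
  have hMlin : LinearMap.ker M.mulVecLin = ⊥ := by
    rw [Matrix.ker_mulVecLin_eq_bot_iff]
    intro z hz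
    rw [hM, Matrix.fromBlocks_mulVec] at hz
    set x := z ∘ Sum.inl with hx
    set y := z ∘ Sum.inr with hy
    have h1 : A *ᵥ x + (LinearMap.toMatrix' w) *ᵥ y = 0 := by
      funext i
      have := congrFun hz (Sum.inl i)
      simpa using this
    have h2 : (LinearMap.toMatrix' v) *ᵥ x = 0 := by
      funext j
      have := congrFun hz (Sum.inr j)
      simpa using this
    rw [hWy] at h1
    have hAx : A *ᵥ x = f x := rfl
    rw [hAx] at h1
    have hfx : f x = -(w y) := by
      have := eq_neg_of_add_eq_zero_left h1
      exact this
    have hwyC : w y ∈ C := (e1 y).2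
    have hfxC : f x ∈ C := by rw [hfx]; exact neg_mem hwyC
    have hfx0 : f x = 0 := by
      have hdis := hC.disjoint
      exact (Submodule.disjoint_def.mp hdis) (f x) ⟨x, rfl⟩ hfxC
    have hwy0 : w y = 0 := by
      rw [hfx0] at hfx
      simpa using hfx.symm
    have hy0 : y = 0 := by
      have hinj : Function.Injective w := by
        apply Function.Injective.comp (Submodule.injective_subtype C)
        exact e1.injective
      exact hinj (by simpa using hwy0)
    have hxker : x ∈ LinearMap.ker f := LinearMap.mem_ker.mpr hfx0
    have hx0 : x = 0 := by
      have hproj : Submodule.linearProjOfIsCompl _ _ hK' x = ⟨x, hxker⟩ :=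
        Submodule.linearProjOfIsCompl_apply_left hK' ⟨x, hxker⟩
      have hvx : v x = e2 ⟨x, hxker⟩ := by
        simp only [v, LinearMap.comp_apply, hproj]
        rfl
      rw [hVx] at h2
      rw [hvx] at h2
      have : (⟨x, hxker⟩ : LinearMap.ker f) = 0 := e2.injective (by simpa using h2)
      simpa using congrArg Subtype.val this
    funext i
    cases i with
    | inl i => exact congrFun hx0 i
    | inr j => exact congrFun hy0 j
  have hinj := LinearMap.ker_eq_bot.mp hMlin
  intro a b hab
  exact hinj (by simpa [Matrix.mulVecLin_apply] using hab)
end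

section
/- Let M, N ∈ ℂ^{N×N}. Then the polynomial p(λ) := det(M - λ·N) ∈ ℂ[λ] has degree at most rank(N). -/
open Matrix Polynomial

/-- Let `M, N ∈ ℂ^{N×N}`. Then the polynomial `p(λ) := det(M - λ N)` has
degree at most `rank N`. -/
theorem degree_det_pencil_le_rank {N : ℕ}
    (M N' : Matrix (Fin N) (Fin N) ℂ) :
    (M.map Polynomial.C - (Polynomial.X : Polynomial ℂ) • N'.map Polynomial.C).det.degree ≤
      (N'.rank : WithBot ℕ) := by
  classical
  set f := (Matrix.detRowAlternating : ((Fin N → ℂ[X]) [⋀^Fin N]→ₗ[ℂ[X]] ℂ[X])) with hf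
  -- the mixed matrices
  set B : Finset (Fin N) → Matrix (Fin N) (Fin N) ℂ :=
    fun s => Matrix.of (s.piecewise (fun i => N' i) (fun i => M i)) with hB
  have key : (M.map Polynomial.C - (Polynomial.X : Polynomial ℂ) • N'.map Polynomial.C).det
      = ∑ s : Finset (Fin N),
        ((-(X : ℂ[X])) ^ s.card) • Polynomial.C ((B s).det) := by
    have hsplit : (M.map Polynomial.C - (Polynomial.X : Polynomial ℂ) • N'.map Polynomial.C)
        = ((fun i => (-(X : ℂ[X])) • ((N'.map Polynomial.C) i)) +
           (fun i => (M.map Polynomial.C) i) : Fin N → Fin N → ℂ[X]) := by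
      funext i j
      simp only [Matrix.sub_apply, Matrix.smul_apply, Matrix.map_apply, Pi.add_apply,
        Pi.smul_apply, smul_eq_mul]
      ring
    rw [show (M.map Polynomial.C - (Polynomial.X : Polynomial ℂ) • N'.map Polynomial.C).det
        = f (M.map Polynomial.C - (Polynomial.X : Polynomial ℂ) • N'.map Polynomial.C) from rfl,
      hsplit, ← AlternatingMap.coe_multilinearMap, f.toMultilinearMap.map_add_univ]
    refine Finset.sum_congr rfl fun s _ => ?_
    have hpiece : s.piecewise (fun i => (-(X : ℂ[X])) • ((N'.map Polynomial.C) i))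
          (fun i => (M.map Polynomial.C) i)
        = fun i => (if i ∈ s then (-(X : ℂ[X])) else 1) • (((B s).map Polynomial.C) i) := by
      funext i j
      by_cases hi : i ∈ s <;>
        simp [Finset.piecewise, hi, hB, Matrix.map_apply, Matrix.of_apply]
    rw [hpiece]
    erw [f.toMultilinearMap.map_smul_univ]
    have hprod : (∏ i : Fin N, (if i ∈ s then (-(X : ℂ[X])) else 1)) = (-(X : ℂ[X])) ^ s.card := by
      rw [Finset.prod_ite, Finset.prod_const, Finset.prod_const, Finset.filter_mem_eq_inter,
        Finset.univ_inter, one_pow, mul_one]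
    rw [hprod]
    congr 1
    have h : f.toMultilinearMap (fun i => ((B s).map Polynomial.C) i)
        = ((B s).map Polynomial.C).det := rfl
    rw [h, show ((B s).map (Polynomial.C : ℂ →+* ℂ[X]))
        = (Polynomial.C : ℂ →+* ℂ[X]).mapMatrix (B s) from rfl, ← RingHom.map_det]
  rw [key]
  refine le_trans (Polynomial.degree_sum_le _ _) ?_
  rw [Finset.sup_le_iff]
  intro s _
  by_cases hcard : s.card ≤ N'.rank
  · rw [smul_eq_mul]
    refine le_trans (Polynomial.degree_mul_le _ _) ?_
    have h1 : ((-(X : ℂ[X])) ^ s.card).degree ≤ (s.card : WithBot ℕ) := by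
      refine le_trans (Polynomial.degree_pow_le _ _) ?_
      rw [Polynomial.degree_neg, Polynomial.degree_X]
      simp
    have h2 : (Polynomial.C ((B s).det)).degree ≤ 0 := Polynomial.degree_C_le
    calc ((-(X : ℂ[X])) ^ s.card).degree + (Polynomial.C ((B s).det)).degree
        ≤ (s.card : WithBot ℕ) + 0 := add_le_add h1 h2
      _ = (s.card : WithBot ℕ) := add_zero _
      _ ≤ (N'.rank : WithBot ℕ) := by exact_mod_cast hcard
  · -- the rows of `B s` indexed by `s` are `s.card > rank` rows of `N'`, hence dependent
    have hdet : (B s).det = 0 := by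
      by_contra h0
      have hu : IsUnit (B s) := by
        rw [Matrix.isUnit_iff_isUnit_det, isUnit_iff_ne_zero]
        exact h0
      have hrows : LinearIndependent ℂ (fun i => (B s) i) :=
        Matrix.linearIndependent_rows_iff_isUnit.mpr hu
      have hsub : LinearIndependent ℂ (fun i : {x // x ∈ s} => (B s) i) :=
        hrows.comp _ Subtype.val_injective
      have heq : (fun i : {x // x ∈ s} => (B s) i) = fun i : {x // x ∈ s} => N' i := by
        funext i
        exact Finset.piecewise_eq_of_mem _ _ _ i.2
      rw [heq] at hsub
      have hcardeq : Fintype.card {x // x ∈ s}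
          = Set.finrank ℂ (Set.range (fun i : {x // x ∈ s} => N' (i : Fin N))) :=
        linearIndependent_iff_card_eq_finrank_span.mp hsub
      have hle : Set.finrank ℂ (Set.range (fun i : {x // x ∈ s} => N' (i : Fin N)))
          ≤ Module.finrank ℂ (Submodule.span ℂ (Set.range N')) := by
        refine Submodule.finrank_mono (Submodule.span_mono ?_)
        rintro _ ⟨i, rfl⟩
        exact ⟨i, rfl⟩
      have hrk := Matrix.rank_eq_finrank_span_row N'
      rw [show N'.row = N' from rfl] at hrk
      rw [Fintype.card_coe] at hcardeq
      rw [Set.finrank] at hcardeq hle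
      omega
    rw [hdet]
    simp
end

section
/- Let A, B ∈ ℂ^{n×n} and V, W ∈ ℂ^{n×m}, let Â = [[A, W],[Vᴴ, 0]] be invertible and B̂ = [[B, 0],[0, 0]] ∈ ℂ^{(n+m)×(n+m)}. Then rank(B̂) = rank(B), the polynomial λ ↦ det(Â - λ·B̂) is nonzero of degree d ≤ rank(B), and consequently the algebraic multiplicity of the eigenvalue at infinity of the bordered pencil, defined as (n+m) - d, is at least n + m - rank(B); in particular it is at least 2m whenever rank(B) ≤ n - m. -/
open Matrix Polynomial

lemma rank_fact {n : ℕ} (B : Matrix (Fin n) (Fin n) ℂ) :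
    ∃ (C : Matrix (Fin n) (Fin B.rank) ℂ) (D : Matrix (Fin B.rank) (Fin n) ℂ), B = C * D := by
  let S := LinearMap.range B.mulVecLin
  let b : Module.Basis (Fin B.rank) ℂ S := Module.finBasis ℂ S
  refine ⟨fun i j => (b j : Fin n → ℂ) i,
    fun j k => b.repr ⟨B.mulVec (Pi.single k 1), ⟨Pi.single k 1, rfl⟩⟩ j, ?_⟩
  ext i k
  have h := b.sum_repr ⟨B.mulVec (Pi.single k 1), ⟨Pi.single k 1, rfl⟩⟩
  have h2 := congrArg (fun v : S => (v : Fin n → ℂ) i) h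
  erw [mul_apply]
  simp only [AddSubmonoidClass.coe_finset_sum, Finset.sum_apply, SetLike.val_smul,
    Pi.smul_apply, smul_eq_mul] at h2
  rw [Finset.sum_congr rfl (fun j _ => mul_comm _ _)]
  rw [h2]
  simp [Matrix.mulVec_single]


/-- Let `Â = [[A, W],[Vᴴ, 0]]` be invertible and `B̂ = [[B, 0],[0, 0]]`.
Then `rank B̂ = rank B`, the polynomial `λ ↦ det(Â - λ B̂)` is nonzero of degree
`d ≤ rank B`, hence the algebraic multiplicity `(n+m) - d` of the eigenvalue at infinity of
the bordered pencil is at least `n + m - rank B`; in particular at least `2m` whenever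
`rank B ≤ n - m`. -/
theorem bordered_pencil_infinity_multiplicity {n m : ℕ}
    (A B : Matrix (Fin n) (Fin n) ℂ) (V W : Matrix (Fin n) (Fin m) ℂ)
    (hinv : IsUnit (Matrix.fromBlocks A W Vᴴ (0 : Matrix (Fin m) (Fin m) ℂ))) :
    (Matrix.fromBlocks B (0 : Matrix (Fin n) (Fin m) ℂ)
        (0 : Matrix (Fin m) (Fin n) ℂ) (0 : Matrix (Fin m) (Fin m) ℂ)).rank = B.rank ∧
    ∀ p : Polynomial ℂ,
      p = ((Matrix.fromBlocks A W Vᴴ (0 : Matrix (Fin m) (Fin m) ℂ)).map Polynomial.C -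
            (Polynomial.X : Polynomial ℂ) •
              (Matrix.fromBlocks B (0 : Matrix (Fin n) (Fin m) ℂ)
                (0 : Matrix (Fin m) (Fin n) ℂ) (0 : Matrix (Fin m) (Fin m) ℂ)).map
                  Polynomial.C).det →
        p ≠ 0 ∧ p.natDegree ≤ B.rank ∧
        n + m - B.rank ≤ (n + m) - p.natDegree ∧
        (B.rank ≤ n - m → 2 * m ≤ (n + m) - p.natDegree) := by
  set Ah : Matrix (Fin n ⊕ Fin m) (Fin n ⊕ Fin m) ℂ :=
    Matrix.fromBlocks A W Vᴴ 0 with hAh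
  set Bh : Matrix (Fin n ⊕ Fin m) (Fin n ⊕ Fin m) ℂ :=
    Matrix.fromBlocks B 0 0 0 with hBh
  -- m ≤ n
  have hmn : m ≤ n := by
    have hmv : Function.Injective (Ah.mulVec) := mulVec_injective_iff_isUnit.2 hinv
    have hW : Function.Injective W.mulVecLin := by
      rw [← LinearMap.ker_eq_bot, LinearMap.ker_eq_bot']
      intro y hy
      have h0 : Ah *ᵥ (Sum.elim 0 y) = Ah *ᵥ 0 := by
        rw [Matrix.mulVec_zero, hAh, fromBlocks_mulVec]
        simp only [Sum.elim_comp_inl, Sum.elim_comp_inr, Matrix.mulVec_zero, zero_add,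
          Matrix.zero_mulVec, add_zero]
        have : W *ᵥ y = 0 := hy
        rw [this]
        ext (i | i) <;> simp
      have := hmv h0
      ext i
      exact congrFun this (Sum.inr i)
    have := LinearMap.finrank_le_finrank_of_injective hW
    simpa using this
  -- rank equality
  have hrank : Bh.rank = B.rank := by
    have h1 : Bh = fromRows (1 : Matrix (Fin n) (Fin n) ℂ) (0 : Matrix (Fin m) (Fin n) ℂ) *
        (B * fromCols (1 : Matrix (Fin n) (Fin n) ℂ) (0 : Matrix (Fin n) (Fin m) ℂ)) := by
      rw [mul_fromCols, fromRows_mul, hBh]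
      ext (i | i) (j | j) <;> simp
    have h2 : B = fromCols (1 : Matrix (Fin n) (Fin n) ℂ) (0 : Matrix (Fin n) (Fin m) ℂ) *
        Bh * fromRows (1 : Matrix (Fin n) (Fin n) ℂ) (0 : Matrix (Fin m) (Fin n) ℂ) := by
      rw [hBh, fromCols_mul_fromBlocks, fromCols_mul_fromRows]
      simp
    refine le_antisymm ?_ ?_
    · rw [h1]
      exact (rank_mul_le_right _ _).trans (rank_mul_le_left _ _)
    · conv_lhs => rw [h2]
      exact (rank_mul_le_left _ _).trans (rank_mul_le_right _ _)
  refine ⟨hrank, ?_⟩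
  rintro p rfl
  set p : ℂ[X] := (Ah.map C - (X : ℂ[X]) • Bh.map C).det with hp
  -- p ≠ 0
  have hdetu : IsUnit Ah.det := (isUnit_iff_isUnit_det _).mp hinv
  have hrw : Ah.map C - (X : ℂ[X]) • Bh.map C =
      (X : ℂ[X]) • (-Bh).map C + Ah.map C := by
    ext i j
    simp [sub_eq_neg_add, add_comm]
  have hcoeff : p.coeff 0 = Ah.det := by
    rw [hp, hrw, coeff_det_X_add_C_zero]
  have hpne : p ≠ 0 := by
    intro h
    rw [h] at hcoeff
    simp at hcoeff
    exact hdetu.ne_zero hcoeff.symm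
  -- degree bound
  obtain ⟨Cm, Dm, hCD⟩ := rank_fact B
  set P : Matrix (Fin n ⊕ Fin m) (Fin B.rank) ℂ := fromRows Cm 0 with hP
  set Q : Matrix (Fin B.rank) (Fin n ⊕ Fin m) ℂ := fromCols Dm 0 with hQ
  have hPQ : Bh = P * Q := by
    rw [hP, hQ, fromRows_mul_fromCols, hBh, ← hCD]
    simp
  have h1 : Ah * Ah⁻¹ = 1 := mul_nonsing_inv _ hdetu
  have key : Ah.map C - (X : ℂ[X]) • Bh.map C =
      Ah.map (C : ℂ →+* ℂ[X]) *
        (1 - ((X : ℂ[X]) • (Ah⁻¹ * P).map C) * Q.map C) := by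
    rw [Matrix.mul_sub, Matrix.mul_one, ← Matrix.mul_assoc, Matrix.mul_smul,
      ← Matrix.map_mul, ← Matrix.mul_assoc, h1, Matrix.one_mul, Matrix.smul_mul,
      ← Matrix.map_mul, ← hPQ]
  have hdeg : p.natDegree ≤ B.rank := by
    have hsplit : p = (Ah.map (C : ℂ →+* ℂ[X])).det *
        (1 - ((X : ℂ[X]) • (Ah⁻¹ * P).map C) * Q.map C).det := by
      rw [hp, key, det_mul]
    rw [det_one_sub_mul_comm] at hsplit
    have hinner : (1 - Q.map (C : ℂ →+* ℂ[X]) * ((X : ℂ[X]) • (Ah⁻¹ * P).map C)) =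
        (X : ℂ[X]) • (-(Q * (Ah⁻¹ * P))).map C + (1 : Matrix (Fin B.rank) (Fin B.rank) ℂ).map C := by
      rw [Matrix.mul_smul, ← Matrix.map_mul,
        Matrix.map_one (C : ℂ →+* ℂ[X]) (map_zero C) (map_one C)]
      have hneg : (-(Q * (Ah⁻¹ * P))).map (C : ℂ →+* ℂ[X]) =
          -((Q * (Ah⁻¹ * P)).map (C : ℂ →+* ℂ[X])) := by
        ext i j : 2
        simp only [Matrix.map_apply, Matrix.neg_apply, map_neg]
      rw [hneg, smul_neg, neg_add_eq_sub]
    rw [hinner] at hsplit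
    have hd1 : ((Ah.map (C : ℂ →+* ℂ[X])).det).natDegree = 0 := by
      have h := RingHom.map_det (C : ℂ →+* ℂ[X]) Ah
      rw [RingHom.mapMatrix_apply] at h
      rw [← h]
      exact natDegree_C _
    have hd2 := Polynomial.natDegree_det_X_add_C_le (-(Q * (Ah⁻¹ * P)))
      (1 : Matrix (Fin B.rank) (Fin B.rank) ℂ)
    rw [hsplit]
    refine (natDegree_mul_le).trans ?_
    rw [hd1, zero_add]
    simpa using hd2
  refine ⟨hpne, hdeg, Nat.sub_le_sub_left hdeg _, fun hr => ?_⟩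
  omega
end

section
/- Let A, B ∈ ℂ^{n×n}, V, W ∈ ℂ^{n×m}, and suppose Â = [[A, W],[Vᴴ, 0]] is invertible; let B̂ = [[B, 0],[0, 0]]. Define Ã ∈ ℂ^{n×n} to be the map sending u ∈ ℂⁿ to the first n entries of Â⁻¹·[B·u; 0] (equivalently, Ã = K·B where K is the top-left n×n block of Â⁻¹). If λ ∈ ℂ with λ ≠ 0 and x̂ = [x1; x2] ∈ ℂ^{n+m} is nonzero with Â·x̂ = λ·B̂·x̂, then x1 ≠ 0 and Ã·x1 = λ⁻¹·x1. -/
open Matrix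

/-- Suppose `Â = [[A, W],[Vᴴ, 0]]` is invertible, `B̂ = [[B, 0],[0, 0]]`, and
`Ã` maps `u` to the first `n` entries of `Â⁻¹ [Bu; 0]`. If `λ ≠ 0` and
`x̂ = [x1; x2] ≠ 0` with `Â x̂ = λ B̂ x̂`, then `x1 ≠ 0` and `Ã x1 = λ⁻¹ x1`. -/
theorem shift_invert_eigenvector {n m : ℕ}
    (A B : Matrix (Fin n) (Fin n) ℂ) (V W : Matrix (Fin n) (Fin m) ℂ)
    (hinv : IsUnit (Matrix.fromBlocks A W Vᴴ (0 : Matrix (Fin m) (Fin m) ℂ)))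
    (l : ℂ) (hl : l ≠ 0) (x1 : Fin n → ℂ) (x2 : Fin m → ℂ)
    (hx : Sum.elim x1 x2 ≠ 0)
    (heig : Matrix.fromBlocks A W Vᴴ (0 : Matrix (Fin m) (Fin m) ℂ) *ᵥ Sum.elim x1 x2 =
      l • (Matrix.fromBlocks B (0 : Matrix (Fin n) (Fin m) ℂ)
        (0 : Matrix (Fin m) (Fin n) ℂ) (0 : Matrix (Fin m) (Fin m) ℂ) *ᵥ Sum.elim x1 x2)) :
    x1 ≠ 0 ∧
    (fun i : Fin n =>
        ((Matrix.fromBlocks A W Vᴴ (0 : Matrix (Fin m) (Fin m) ℂ))⁻¹ *ᵥ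
          Sum.elim (B *ᵥ x1) (0 : Fin m → ℂ)) (Sum.inl i)) = l⁻¹ • x1 := by
  set Ahat := Matrix.fromBlocks A W Vᴴ (0 : Matrix (Fin m) (Fin m) ℂ) with hA
  have hdet : IsUnit Ahat.det := (Matrix.isUnit_iff_isUnit_det _).mp hinv
  have hinv_mul : Ahat⁻¹ * Ahat = 1 := Matrix.nonsing_inv_mul _ hdet
  have hrecover : ∀ v : Fin n ⊕ Fin m → ℂ, Ahat⁻¹ *ᵥ (Ahat *ᵥ v) = v := by
    intro v
    rw [Matrix.mulVec_mulVec, hinv_mul, Matrix.one_mulVec]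
  have hB : Matrix.fromBlocks B (0 : Matrix (Fin n) (Fin m) ℂ)
      (0 : Matrix (Fin m) (Fin n) ℂ) (0 : Matrix (Fin m) (Fin m) ℂ) *ᵥ Sum.elim x1 x2 =
      Sum.elim (B *ᵥ x1) (0 : Fin m → ℂ) := by
    rw [Matrix.fromBlocks_mulVec]
    simp
  rw [hB] at heig
  have hx1 : x1 ≠ 0 := by
    intro h
    apply hx
    have hBx1 : B *ᵥ x1 = 0 := by rw [h, Matrix.mulVec_zero]
    have : Ahat *ᵥ Sum.elim x1 x2 = 0 := by
      rw [heig, hBx1]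
      simp
    have := hrecover (Sum.elim x1 x2)
    rw [‹Ahat *ᵥ Sum.elim x1 x2 = 0›, Matrix.mulVec_zero] at this
    exact this.symm
  refine ⟨hx1, ?_⟩
  have key : Ahat⁻¹ *ᵥ Sum.elim (B *ᵥ x1) (0 : Fin m → ℂ) = l⁻¹ • Sum.elim x1 x2 := by
    have h1 : Ahat⁻¹ *ᵥ (Ahat *ᵥ Sum.elim x1 x2) = Sum.elim x1 x2 := hrecover _
    rw [heig, Matrix.mulVec_smul] at h1
    rw [← h1, smul_smul, inv_mul_cancel₀ hl, one_smul]
  funext i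
  have := congrFun key (Sum.inl i)
  simpa using this
end

section
/- Let A, B ∈ ℂ^{n×n}, V, W ∈ ℂ^{n×m}, and suppose Â = [[A, W],[Vᴴ, 0]] is invertible; let B̂ = [[B, 0],[0, 0]]. Define Ã ∈ ℂ^{n×n} to be the map sending u ∈ ℂⁿ to the first n entries of Â⁻¹·[B·u; 0]. If θ ∈ ℂ with θ ≠ 0 and x1 ∈ ℂⁿ is nonzero with Ã·x1 = θ·x1, then the vector x̂ := θ⁻¹·Â⁻¹·[B·x1; 0] ∈ ℂ^{n+m} satisfies Â·x̂ = θ⁻¹·B̂·x̂ and the first n entries of x̂ equal x1 (so x̂ ≠ 0); i.e., θ⁻¹ is an eigenvalue of the bordered pencil. -/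
open Matrix

/-- Suppose `Â = [[A, W],[Vᴴ, 0]]` is invertible, `B̂ = [[B, 0],[0, 0]]`, and
`Ã` maps `u` to the first `n` entries of `Â⁻¹ [Bu; 0]`. If `θ ≠ 0` and `x1 ≠ 0` with
`Ã x1 = θ x1`, then `x̂ := θ⁻¹ Â⁻¹ [B x1; 0]` satisfies `Â x̂ = θ⁻¹ B̂ x̂` and its first `n`
entries equal `x1` (so `x̂ ≠ 0`); i.e., `θ⁻¹` is an eigenvalue of the bordered pencil. -/
theorem shift_invert_eigenvalue_lift {n m : ℕ}
    (A B : Matrix (Fin n) (Fin n) ℂ) (V W : Matrix (Fin n) (Fin m) ℂ)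
    (hinv : IsUnit (Matrix.fromBlocks A W Vᴴ (0 : Matrix (Fin m) (Fin m) ℂ)))
    (θ : ℂ) (hθ : θ ≠ 0) (x1 : Fin n → ℂ) (hx1 : x1 ≠ 0)
    (heig : (fun i : Fin n =>
        ((Matrix.fromBlocks A W Vᴴ (0 : Matrix (Fin m) (Fin m) ℂ))⁻¹ *ᵥ
          Sum.elim (B *ᵥ x1) (0 : Fin m → ℂ)) (Sum.inl i)) = θ • x1) :
    Matrix.fromBlocks A W Vᴴ (0 : Matrix (Fin m) (Fin m) ℂ) *ᵥ
        (θ⁻¹ • ((Matrix.fromBlocks A W Vᴴ (0 : Matrix (Fin m) (Fin m) ℂ))⁻¹ *ᵥ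
          Sum.elim (B *ᵥ x1) (0 : Fin m → ℂ))) =
      θ⁻¹ • (Matrix.fromBlocks B (0 : Matrix (Fin n) (Fin m) ℂ)
        (0 : Matrix (Fin m) (Fin n) ℂ) (0 : Matrix (Fin m) (Fin m) ℂ) *ᵥ
          (θ⁻¹ • ((Matrix.fromBlocks A W Vᴴ (0 : Matrix (Fin m) (Fin m) ℂ))⁻¹ *ᵥ
            Sum.elim (B *ᵥ x1) (0 : Fin m → ℂ)))) ∧
    (fun i : Fin n =>
        (θ⁻¹ • ((Matrix.fromBlocks A W Vᴴ (0 : Matrix (Fin m) (Fin m) ℂ))⁻¹ *ᵥ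
          Sum.elim (B *ᵥ x1) (0 : Fin m → ℂ))) (Sum.inl i)) = x1 := by
  set Ahat := Matrix.fromBlocks A W Vᴴ (0 : Matrix (Fin m) (Fin m) ℂ) with hA
  set y := Ahat⁻¹ *ᵥ Sum.elim (B *ᵥ x1) (0 : Fin m → ℂ) with hy
  have htop : (fun i : Fin n => (θ⁻¹ • y) (Sum.inl i)) = x1 := by
    funext i
    have := congrFun heig i
    simp only [Pi.smul_apply, smul_eq_mul] at this ⊢
    rw [this]
    field_simp
  refine ⟨?_, htop⟩
  have hAy : Ahat *ᵥ y = Sum.elim (B *ᵥ x1) (0 : Fin m → ℂ) := by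
    rw [hy, Matrix.mulVec_mulVec, Matrix.mul_nonsing_inv _
      ((Matrix.isUnit_iff_isUnit_det _).mp hinv), Matrix.one_mulVec]
  have hBhat : Matrix.fromBlocks B (0 : Matrix (Fin n) (Fin m) ℂ)
      (0 : Matrix (Fin m) (Fin n) ℂ) (0 : Matrix (Fin m) (Fin m) ℂ) *ᵥ (θ⁻¹ • y)
      = Sum.elim (B *ᵥ x1) (0 : Fin m → ℂ) := by
    funext j
    cases j with
    | inl i =>
      simp only [Matrix.fromBlocks_mulVec, Sum.elim_inl, Matrix.mulVec_add]
      have : (fun i => (θ⁻¹ • y) (Sum.inl i)) = x1 := htop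
      simp only [Matrix.mulVec, dotProduct, Matrix.zero_apply, zero_mul,
        Finset.sum_const_zero, Pi.add_apply, add_zero]
      exact Finset.sum_congr rfl fun k _ => by
        rw [show ((θ⁻¹ • y) ∘ Sum.inl) k = x1 k from congrFun htop k]
    | inr i =>
      simp [Matrix.fromBlocks_mulVec, Matrix.mulVec, dotProduct]
  rw [Matrix.mulVec_smul, hAy, hBhat]
end

section
/- Let A, B ∈ ℂ^{n×m} with normal rank k := nrank(A,B), and let W ∈ ℂ^{n×p}. Assume there exists μ ∈ ℂ with rank([A - μ·B, W]) = k + p (block matrix juxtaposing A - μ·B and W). Then for every λ0 ∈ ℂ with rank(A - λ0·B) < k, one has rank([A - λ0·B, W]) < max over λ ∈ ℂ of rank([A - λ·B, W]); i.e., every eigenvalue of the rectangular pencil A - λB remains an eigenvalue of the bordered rectangular pencil [A - λB, W]. -/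
open Matrix

lemma range_fromColumns_mulVecLin {n m p : ℕ} (M : Matrix (Fin n) (Fin m) ℂ)
    (W : Matrix (Fin n) (Fin p) ℂ) :
    LinearMap.range (Matrix.fromCols M W).mulVecLin =
      LinearMap.range M.mulVecLin ⊔ LinearMap.range W.mulVecLin := by
  apply le_antisymm
  · rintro x ⟨v, rfl⟩
    have : (fromCols M W).mulVecLin v =
        M.mulVecLin (v ∘ Sum.inl) + W.mulVecLin (v ∘ Sum.inr) := by
      have hv : v = Sum.elim (v ∘ Sum.inl) (v ∘ Sum.inr) := by
        ext (i | i) <;> rfl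
      rw [mulVecLin_apply, mulVecLin_apply, mulVecLin_apply]
      conv_lhs => rw [hv]
      rw [fromCols_mulVec_sumElim]
    rw [this]
    exact Submodule.add_mem _ (Submodule.mem_sup_left ⟨_, rfl⟩)
      (Submodule.mem_sup_right ⟨_, rfl⟩)
  · rw [sup_le_iff]
    constructor
    · rintro x ⟨v, rfl⟩
      refine ⟨Sum.elim v 0, ?_⟩
      simp [mulVecLin_apply]
    · rintro x ⟨v, rfl⟩
      refine ⟨Sum.elim 0 v, ?_⟩
      simp [mulVecLin_apply]

lemma rank_fromColumns_le {n m p : ℕ} (M : Matrix (Fin n) (Fin m) ℂ)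
    (W : Matrix (Fin n) (Fin p) ℂ) :
    (Matrix.fromCols M W).rank ≤ M.rank + p := by
  rw [Matrix.rank, range_fromColumns_mulVecLin]
  calc _ ≤ Module.finrank ℂ (LinearMap.range M.mulVecLin) +
        Module.finrank ℂ (LinearMap.range W.mulVecLin) :=
      Submodule.finrank_add_le_finrank_add_finrank _ _
    _ ≤ M.rank + p := add_le_add le_rfl (W.rank_le_width)

theorem eigenvalue_preserved_by_column_border {n m p : ℕ}
    (A B : Matrix (Fin n) (Fin m) ℂ) (W : Matrix (Fin n) (Fin p) ℂ) (k : ℕ)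
    (hk_le : ∀ μ : ℂ, (A - μ • B).rank ≤ k)
    (hk_attained : ∃ μ : ℂ, (A - μ • B).rank = k)
    (hfull : ∃ μ : ℂ, (Matrix.fromCols (A - μ • B) W).rank = k + p)
    (k' : ℕ)
    (hk'_le : ∀ μ : ℂ, (Matrix.fromCols (A - μ • B) W).rank ≤ k')
    (hk'_attained : ∃ μ : ℂ, (Matrix.fromCols (A - μ • B) W).rank = k') :
    ∀ l0 : ℂ, (A - l0 • B).rank < k →
      (Matrix.fromCols (A - l0 • B) W).rank < k' := by
  intro l0 hl0
  obtain ⟨μ, hμ⟩ := hfull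
  have hk'ge : k + p ≤ k' := hμ ▸ hk'_le μ
  calc (Matrix.fromCols (A - l0 • B) W).rank ≤ (A - l0 • B).rank + p :=
      rank_fromColumns_le _ _
    _ < k + p := by omega
    _ ≤ k' := hk'ge
end

section
/- Let A0, A1, A2 ∈ ℂ^{n×n} and form the companion linearization A = [[A1, A0],[Iₙ, 0]], B = [[-A2, 0],[0, Iₙ]] ∈ ℂ^{2n×2n}. Then for every λ ∈ ℂ, rank(A - λ·B) = n + rank(λ²·A2 + λ·A1 + A0). Consequently nrank(A,B) = n + max_{λ∈ℂ} rank(λ²A2 + λA1 + A0), and λ0 ∈ ℂ satisfies rank(A - λ0·B) < nrank(A,B) if and only if rank(λ0²A2 + λ0A1 + A0) < max_{λ∈ℂ} rank(λ²A2 + λA1 + A0). -/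
open Matrix


private def submoduleProdEquiv {R M N : Type*} [CommRing R] [AddCommGroup M] [AddCommGroup N]
    [Module R M] [Module R N] (p : Submodule R M) (q : Submodule R N) :
    (p.prod q) ≃ₗ[R] p × q where
  toFun x := (⟨x.1.1, x.2.1⟩, ⟨x.1.2, x.2.2⟩)
  map_add' _ _ := rfl
  map_smul' _ _ := rfl
  invFun x := ⟨(x.1.1, x.2.1), ⟨x.1.2, x.2.2⟩⟩
  left_inv _ := rfl
  right_inv _ := rfl

private lemma range_prodMap' {R M N M' N' : Type*} [CommRing R] [AddCommGroup M] [AddCommGroup N]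
    [AddCommGroup M'] [AddCommGroup N'] [Module R M] [Module R N] [Module R M'] [Module R N']
    (f : M →ₗ[R] M') (g : N →ₗ[R] N') :
    LinearMap.range (f.prodMap g) = (LinearMap.range f).prod (LinearMap.range g) := by
  ext ⟨x, y⟩
  simp only [LinearMap.mem_range, Submodule.mem_prod, LinearMap.prodMap_apply, Prod.ext_iff]
  constructor
  · rintro ⟨⟨a, b⟩, h1, h2⟩; exact ⟨⟨a, h1⟩, ⟨b, h2⟩⟩
  · rintro ⟨⟨a, h1⟩, ⟨b, h2⟩⟩; exact ⟨(a, b), h1, h2⟩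

private lemma rank_fromBlocks_diag {n m : ℕ} (A : Matrix (Fin n) (Fin n) ℂ)
    (D : Matrix (Fin m) (Fin m) ℂ) :
    (fromBlocks A (0 : Matrix (Fin n) (Fin m) ℂ) (0 : Matrix (Fin m) (Fin n) ℂ) D).rank
      = A.rank + D.rank := by
  classical
  let b1 : Module.Basis (Fin n) ℂ (Fin n → ℂ) := Pi.basisFun ℂ (Fin n)
  let b2 : Module.Basis (Fin m) ℂ (Fin m → ℂ) := Pi.basisFun ℂ (Fin m)
  have hA : A = LinearMap.toMatrix b1 b1 (Matrix.toLin b1 b1 A) := by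
    rw [LinearMap.toMatrix_toLin]
  have hD : D = LinearMap.toMatrix b2 b2 (Matrix.toLin b2 b2 D) := by
    rw [LinearMap.toMatrix_toLin]
  have hM : fromBlocks A (0 : Matrix (Fin n) (Fin m) ℂ) (0 : Matrix (Fin m) (Fin n) ℂ) D
      = LinearMap.toMatrix (b1.prod b2) (b1.prod b2)
          ((Matrix.toLin b1 b1 A).prodMap (Matrix.toLin b2 b2 D)) := by
    rw [LinearMap.toMatrix_prodMap]
    conv_lhs => rw [hA, hD]
  rw [hM, Matrix.rank_eq_finrank_range_toLin _ (b1.prod b2) (b1.prod b2),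
    Matrix.toLin_toMatrix, range_prodMap']
  rw [A.rank_eq_finrank_range_toLin b1 b1, D.rank_eq_finrank_range_toLin b2 b2]
  rw [(submoduleProdEquiv _ _).finrank_eq, Module.finrank_prod]

private lemma rank_pencil {n : ℕ} (A0 A1 A2 : Matrix (Fin n) (Fin n) ℂ) (μ : ℂ) :
    ((Matrix.fromBlocks A1 A0 (1 : Matrix (Fin n) (Fin n) ℂ)
        (0 : Matrix (Fin n) (Fin n) ℂ)) -
      μ • (Matrix.fromBlocks (-A2) (0 : Matrix (Fin n) (Fin n) ℂ)
        (0 : Matrix (Fin n) (Fin n) ℂ) (1 : Matrix (Fin n) (Fin n) ℂ))).rank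
      = n + (μ ^ 2 • A2 + μ • A1 + A0).rank := by
  classical
  set X : Matrix (Fin n) (Fin n) ℂ := A1 + μ • A2 with hX
  set Dm : Matrix (Fin n) (Fin n) ℂ := -(μ • (1 : Matrix (Fin n) (Fin n) ℂ)) with hDm
  have hM : (Matrix.fromBlocks A1 A0 (1 : Matrix (Fin n) (Fin n) ℂ)
        (0 : Matrix (Fin n) (Fin n) ℂ)) -
      μ • (Matrix.fromBlocks (-A2) (0 : Matrix (Fin n) (Fin n) ℂ)
        (0 : Matrix (Fin n) (Fin n) ℂ) (1 : Matrix (Fin n) (Fin n) ℂ))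
      = fromBlocks X A0 (1 : Matrix (Fin n) (Fin n) ℂ) Dm := by
    rw [Matrix.fromBlocks_smul, sub_eq_add_neg, Matrix.fromBlocks_neg, Matrix.fromBlocks_add]
    congr 1 <;> simp [hX, hDm]
  set J : Matrix (Fin n ⊕ Fin n) (Fin n ⊕ Fin n) ℂ :=
    fromBlocks (0 : Matrix (Fin n) (Fin n) ℂ) 1 1 0 with hJ
  have hJJ : J * J = 1 := by
    rw [hJ, Matrix.fromBlocks_multiply]
    simp [← Matrix.fromBlocks_one]
  have hJdet : IsUnit J.det := IsUnit.of_mul_eq_one J.det (by rw [← Matrix.det_mul, hJJ, Matrix.det_one])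
  have hJM : J * fromBlocks X A0 (1 : Matrix (Fin n) (Fin n) ℂ) Dm
      = fromBlocks (1 : Matrix (Fin n) (Fin n) ℂ) Dm X A0 := by
    rw [hJ, Matrix.fromBlocks_multiply]; simp
  have h1 : ((Matrix.fromBlocks A1 A0 (1 : Matrix (Fin n) (Fin n) ℂ)
        (0 : Matrix (Fin n) (Fin n) ℂ)) -
      μ • (Matrix.fromBlocks (-A2) (0 : Matrix (Fin n) (Fin n) ℂ)
        (0 : Matrix (Fin n) (Fin n) ℂ) (1 : Matrix (Fin n) (Fin n) ℂ))).rank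
      = (fromBlocks (1 : Matrix (Fin n) (Fin n) ℂ) Dm X A0).rank := by
    rw [hM, ← hJM, Matrix.rank_mul_eq_right_of_isUnit_det J _ hJdet]
  haveI : Invertible (1 : Matrix (Fin n) (Fin n) ℂ) := invertibleOne
  rw [h1, Matrix.fromBlocks_eq_of_invertible₁₁ (1 : Matrix (Fin n) (Fin n) ℂ) Dm X A0]
  rw [Matrix.rank_mul_eq_left_of_isUnit_det, Matrix.rank_mul_eq_right_of_isUnit_det]
  · rw [rank_fromBlocks_diag, Matrix.rank_one, Fintype.card_fin]
    congr 2
    rw [hDm, hX]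
    simp only [invOf_one, Matrix.mul_one, Matrix.mul_neg, Matrix.mul_smul, Matrix.mul_one,
      sub_neg_eq_add, smul_add, smul_smul, pow_two]
    abel
  · rw [Matrix.det_fromBlocks_zero₁₂]; simp
  · rw [Matrix.det_fromBlocks_zero₂₁]; simp

/-- For the companion linearization `A = [[A1, A0],[I, 0]]`,
`B = [[-A2, 0],[0, I]]` of the quadratic pencil `λ²A2 + λA1 + A0`:
`rank(A - λB) = n + rank(λ²A2 + λA1 + A0)` for every `λ`; consequently
`nrank(A,B) = n + max_λ rank(λ²A2 + λA1 + A0)`, and `λ0` is an eigenvalue of the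
linearization iff it is an eigenvalue of the quadratic pencil. -/
theorem companion_linearization_rank {n : ℕ}
    (A0 A1 A2 : Matrix (Fin n) (Fin n) ℂ)
    (k : ℕ)
    (hk_le : ∀ μ : ℂ, ((Matrix.fromBlocks A1 A0 (1 : Matrix (Fin n) (Fin n) ℂ)
        (0 : Matrix (Fin n) (Fin n) ℂ)) -
      μ • (Matrix.fromBlocks (-A2) (0 : Matrix (Fin n) (Fin n) ℂ)
        (0 : Matrix (Fin n) (Fin n) ℂ) (1 : Matrix (Fin n) (Fin n) ℂ))).rank ≤ k)
    (hk_attained : ∃ μ : ℂ, ((Matrix.fromBlocks A1 A0 (1 : Matrix (Fin n) (Fin n) ℂ)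
        (0 : Matrix (Fin n) (Fin n) ℂ)) -
      μ • (Matrix.fromBlocks (-A2) (0 : Matrix (Fin n) (Fin n) ℂ)
        (0 : Matrix (Fin n) (Fin n) ℂ) (1 : Matrix (Fin n) (Fin n) ℂ))).rank = k)
    (kq : ℕ)
    (hkq_le : ∀ μ : ℂ, (μ ^ 2 • A2 + μ • A1 + A0).rank ≤ kq)
    (hkq_attained : ∃ μ : ℂ, (μ ^ 2 • A2 + μ • A1 + A0).rank = kq) :
    (∀ l : ℂ, ((Matrix.fromBlocks A1 A0 (1 : Matrix (Fin n) (Fin n) ℂ)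
        (0 : Matrix (Fin n) (Fin n) ℂ)) -
      l • (Matrix.fromBlocks (-A2) (0 : Matrix (Fin n) (Fin n) ℂ)
        (0 : Matrix (Fin n) (Fin n) ℂ) (1 : Matrix (Fin n) (Fin n) ℂ))).rank =
        n + (l ^ 2 • A2 + l • A1 + A0).rank) ∧
    k = n + kq ∧
    (∀ l0 : ℂ, ((Matrix.fromBlocks A1 A0 (1 : Matrix (Fin n) (Fin n) ℂ)
        (0 : Matrix (Fin n) (Fin n) ℂ)) -
      l0 • (Matrix.fromBlocks (-A2) (0 : Matrix (Fin n) (Fin n) ℂ)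
        (0 : Matrix (Fin n) (Fin n) ℂ) (1 : Matrix (Fin n) (Fin n) ℂ))).rank < k ↔
        (l0 ^ 2 • A2 + l0 • A1 + A0).rank < kq) := by
  have hkkq : k = n + kq := by
    obtain ⟨μ, hμ⟩ := hk_attained
    obtain ⟨ν, hν⟩ := hkq_attained
    have h1 : k = n + (μ ^ 2 • A2 + μ • A1 + A0).rank := by rw [← hμ, rank_pencil]
    have h2 := hkq_le μ
    have h3 := hk_le ν
    rw [rank_pencil, hν] at h3
    omega
  refine ⟨fun l => rank_pencil A0 A1 A2 l, hkkq, fun l0 => ?_⟩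
  rw [rank_pencil, hkkq]
  omega
end
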